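/- Let Ω be the subset of ℝ² consisting of pairs (Y, W) with W² < ε²(1 + Y²), for a fixed ε > 0. Then Ω is connected and its convex hull is all of ℝ². -/

import Mathlib

theorem stmt_0 (ε : ℝ) (hε : 0 < ε)
    (Ω : Set (ℝ × ℝ))
    (hΩ : Ω = {p : ℝ × ℝ | p.2 ^ 2 < ε ^ 2 * (1 + p.1 ^ 2)}) :
    IsConnected Ω ∧ convexHull ℝ Ω = Set.univ := by
  subst hΩ
  have hmem : ∀ a : ℝ, ((a, 0) : ℝ × ℝ) ∈ {p : ℝ × ℝ | p.2 ^ 2 < ε ^ 2 * (1 + p.1 ^ 2)} := by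
    intro a
    simp only [Set.mem_setOf_eq]
    nlinarith [sq_nonneg a, mul_pos hε hε]
  constructor
  · refine ⟨⟨(0, 0), hmem 0⟩, ?_⟩
    apply isPreconnected_of_forall ((0 : ℝ), (0 : ℝ))
    rintro ⟨a, b⟩ hab
    refine ⟨segment ℝ ((0 : ℝ), (0 : ℝ)) (a, 0) ∪ segment ℝ (a, 0) (a, b), ?_, ?_, ?_, ?_⟩
    · rintro p (hp | hp)
      · obtain ⟨u, v, hu, hv, huv, rfl⟩ := hp
        simp only [Prod.smul_mk, Prod.mk_add_mk, smul_eq_mul, mul_zero, add_zero,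
          Set.mem_setOf_eq, zero_add, mul_zero]
        nlinarith [sq_nonneg (u*a+v*a), mul_pos hε hε]
      · obtain ⟨u, v, hu, hv, huv, rfl⟩ := hp
        simp only [Set.mem_setOf_eq] at hab ⊢
        simp only [Prod.smul_mk, Prod.mk_add_mk, smul_eq_mul, mul_zero, zero_add]
        have h1 : u * a + v * a = a := by rw [← add_mul, huv, one_mul]
        rw [h1]
        have h2 : (u * 0 + v * b) ^ 2 ≤ b ^ 2 := by
          have : u * 0 + v * b = v * b := by ring
          rw [this]
          have hv1 : v ≤ 1 := by linarith
          nlinarith [mul_nonneg (mul_nonneg (sub_nonneg.2 hv1) (by linarith : (0:ℝ) ≤ 1 + v)) (sq_nonneg b)]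
        linarith
    · left; exact left_mem_segment ℝ _ _
    · right; exact right_mem_segment ℝ _ _
    · apply IsPreconnected.union ((a : ℝ), (0 : ℝ))
      · exact right_mem_segment ℝ _ _
      · exact left_mem_segment ℝ _ _
      · exact (convex_segment _ _).isPreconnected
      · exact (convex_segment _ _).isPreconnected
  · apply Set.eq_univ_of_forall
    rintro ⟨Y, W⟩
    set y : ℝ := |Y| + |W| / ε + 1 with hy
    have hy0 : 0 < y := by positivity
    have hεy : |W| < ε * y := by
      have : ε * y = ε * |Y| + |W| + ε := by
        rw [hy, mul_add, mul_add, mul_div_assoc', mul_div_cancel_left₀ _ hε.ne']; ring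
      nlinarith [abs_nonneg Y, abs_nonneg W]
    have hW : W ^ 2 < ε ^ 2 * (1 + y ^ 2) := by
      have h1 : W ^ 2 ≤ |W| ^ 2 := by rw [sq_abs]
      nlinarith [hεy, abs_nonneg W, sq_nonneg ε, mul_pos hε hy0]
    have hm1 : ((y, W) : ℝ × ℝ) ∈ {p : ℝ × ℝ | p.2 ^ 2 < ε ^ 2 * (1 + p.1 ^ 2)} := by
      simpa using hW
    have hm2 : ((-y, W) : ℝ × ℝ) ∈ {p : ℝ × ℝ | p.2 ^ 2 < ε ^ 2 * (1 + p.1 ^ 2)} := by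
      simp only [Set.mem_setOf_eq]
      rw [neg_pow]; simpa using hW
    have hseg : ((Y, W) : ℝ × ℝ) ∈ segment ℝ ((-y, W) : ℝ × ℝ) ((y, W) : ℝ × ℝ) := by
      refine ⟨(y - Y) / (2 * y), (Y + y) / (2 * y), ?_, ?_, ?_, ?_⟩
      · apply div_nonneg _ (by positivity)
        have := abs_nonneg W
        have h3 : Y ≤ |Y| := le_abs_self Y
        have h4 := div_nonneg (abs_nonneg W) hε.le
        have : y ≥ |Y| := by rw [hy]; linarith
        linarith
      · apply div_nonneg _ (by positivity)
        have h3 : -Y ≤ |Y| := neg_le_abs Y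
        have h4 := div_nonneg (abs_nonneg W) hε.le
        have : y ≥ |Y| := by rw [hy]; linarith
        linarith
      · field_simp; ring
      · have h2y : (2 * y) ≠ 0 := by positivity
        simp only [Prod.smul_mk, Prod.mk_add_mk, smul_eq_mul, Prod.mk.injEq]
        constructor
        · field_simp; ring
        · field_simp; ring
    exact convexHull_mono (by rintro p (rfl | rfl) <;> [exact hm2; exact hm1])
      (segment_subset_convexHull (Set.mem_insert _ _) (Set.mem_insert_of_mem _ rfl) hseg)
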